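/- Let k be a field, m ≥ 1 an integer, and g a finite-dimensional Lie algebra over k whose Killing form κ is nondegenerate, equipped with a (ℤ × ℤ/m)-bigrading (q(k,i))_{(k,i) ∈ ℤ × ℤ/m}. Fix s ∈ ℤ and for each N ∈ ℤ set p_N = Σ_{k ≥ sN} q(k, N̄), u_N = Σ_{k > sN} q(k, N̄), and g_{N̄} = Σ_{k ∈ ℤ} q(k, N̄). Then for every N ∈ ℤ one has u_N = {x ∈ g_{N̄} : κ(x, y) = 0 for all y ∈ p_{-N}}, i.e., the nilradical of the spiral equals the Killing-orthogonal complement of p_{-N} inside g_{N̄}. (The description of the nilradical of an ε-spiral in 2.5, with s = rε.) -/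

import Mathlib

/-- The description in 2.5 of the nilradical of an `ε`-spiral (with `s = rε`): for a
`(ℤ × ℤ/m)`-bigraded finite-dimensional Lie algebra with nondegenerate Killing form,
`u_N` is exactly the set of elements of `g_{N̄}` that are Killing-orthogonal to `p_{-N}`. -/
theorem spiral_nilradical_eq_killing_orthogonal
    (k : Type*) [Field k]
    (L : Type*) [LieRing L] [LieAlgebra k L] [Module.Finite k L]
    (m : ℕ) (hm : 1 ≤ m)
    (q : ℤ × ZMod m → Submodule k L)
    (hdecomp : DirectSum.IsInternal q)
    (hbracket : ∀ a b : ℤ × ZMod m, ∀ x ∈ q a, ∀ y ∈ q b, ⁅x, y⁆ ∈ q (a + b))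
    (hkilling : (killingForm k L).Nondegenerate)
    (s : ℤ)
    (p u gbar : ℤ → Submodule k L)
    (hp : ∀ N : ℤ, p N = ⨆ c ∈ {c : ℤ | s * N ≤ c}, q (c, (N : ZMod m)))
    (hu : ∀ N : ℤ, u N = ⨆ c ∈ {c : ℤ | s * N < c}, q (c, (N : ZMod m)))
    (hgbar : ∀ N : ℤ, gbar N = ⨆ c : ℤ, q (c, (N : ZMod m))) :
    ∀ (N : ℤ) (x : L),
      x ∈ u N ↔ (x ∈ gbar N ∧ ∀ y ∈ p (-N), killingForm k L x y = 0) := by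
  classical
  -- components of the grading pair to zero unless the degrees sum to zero
  have key : ∀ a b : ℤ × ZMod m, a + b ≠ 0 →
      ∀ x ∈ q a, ∀ y ∈ q b, killingForm k L x y = 0 := by
    intro a b hab x hx y hy
    rw [killingForm_apply_apply]
    refine LinearMap.trace_eq_zero_of_mapsTo_ne hdecomp (fun c => a + b + c)
      (fun c hc => hab (add_eq_right.mp hc)) ?_
    intro c z hz
    have h1 : ⁅y, z⁆ ∈ q (b + c) := hbracket b c y hy z hz
    have h2 : ⁅x, ⁅y, z⁆⁆ ∈ q (a + (b + c)) := hbracket a (b + c) x hx _ h1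
    simpa [add_assoc] using h2
  have key2 : ∀ (S : Set ℤ) (j : ZMod m) (b : ℤ × ZMod m),
      (∀ c ∈ S, ((c, j) : ℤ × ZMod m) + b ≠ 0) →
      ∀ x', x' ∈ (⨆ c ∈ S, q (c, j)) → ∀ y ∈ q b, killingForm k L x' y = 0 := by
    intro S j b hS x' hx' y hy
    rw [iSup_subtype'] at hx'
    refine Submodule.iSup_induction _ (motive := fun z => killingForm k L z y = 0) hx' ?_ ?_ ?_
    · rintro ⟨c, hc⟩ z hz
      exact key (c, j) b (hS c hc) z hz y hy
    · simp
    · intro z w hz hw; simp [map_add, hz, hw]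
  intro N x
  constructor
  · intro hx
    constructor
    · have hle : u N ≤ gbar N := by
        rw [hu, hgbar]
        exact iSup_le fun c => iSup_le fun _ => le_iSup (fun c => q (c, (N : ZMod m))) c
      exact hle hx
    · intro y hy
      rw [hp] at hy
      rw [iSup_subtype'] at hy
      refine Submodule.iSup_induction _ (motive := fun z => killingForm k L x z = 0) hy ?_ ?_ ?_
      · rintro ⟨c', hc'⟩ z hz
        rw [hu] at hx
        refine key2 {c : ℤ | s * N < c} (N : ZMod m) (c', ((-N : ℤ) : ZMod m)) ?_ x hx z hz
        intro c hc heq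
        have h1 : c + c' = 0 := congrArg Prod.fst heq
        have hc'' : s * (-N) ≤ c' := hc'
        have : s * N < c := hc
        have hmn : s * (-N) = -(s * N) := by ring
        omega
      · simp
      · intro z w hz hw; simp [map_add, hz, hw]
  · rintro ⟨hg, horth⟩
    have hsplit : gbar N = (⨆ c ∈ {c : ℤ | c ≤ s * N}, q (c, (N : ZMod m))) ⊔ u N := by
      rw [hgbar, hu]
      rw [iSup_split (fun c : ℤ => q (c, (N : ZMod m))) (fun c => c ≤ s * N)]
      congr 1
      simp only [not_le]
      rfl
    rw [hsplit] at hg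
    obtain ⟨xv, hxv, xu, hxu, hxsum⟩ := Submodule.mem_sup.mp hg
    suffices hxv0 : xv = 0 by
      rw [← hxsum, hxv0, zero_add]; exact hxu
    apply hkilling.1
    intro y
    have hy : y ∈ ⨆ a, q a := by
      rw [hdecomp.submodule_iSup_eq_top]; trivial
    refine Submodule.iSup_induction _ (motive := fun z => killingForm k L xv z = 0) hy ?_ ?_ ?_
    · intro a z hz
      by_cases hi : a.2 = ((-N : ℤ) : ZMod m)
      · by_cases hc : s * (-N) ≤ a.1
        · -- z lies in p (-N)
          have hzp : z ∈ p (-N) := by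
            rw [hp]
            have hmem : z ∈ q (a.1, ((-N : ℤ) : ZMod m)) := by
              rw [← hi]; exact hz
            exact Submodule.mem_iSup_of_mem a.1 (Submodule.mem_iSup_of_mem hc hmem)
          have h1 : killingForm k L x z = 0 := horth z hzp
          have h2 : killingForm k L xu z = 0 := by
            rw [hu] at hxu
            refine key2 {c : ℤ | s * N < c} (N : ZMod m) a ?_ xu hxu z hz
            intro c hcS heq
            have hfst : c + a.1 = 0 := congrArg Prod.fst heq
            have : s * N < c := hcS
            have hmn : s * (-N) = -(s * N) := by ring
            omega
          have h3 : killingForm k L (xv + xu) z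
              = killingForm k L xv z + killingForm k L xu z := by
            simp [map_add]
          rw [hxsum, h1] at h3
          rw [h2, add_zero] at h3
          exact h3.symm
        · refine key2 {c : ℤ | c ≤ s * N} (N : ZMod m) a ?_ xv hxv z hz
          intro c hcS heq
          have hfst : c + a.1 = 0 := congrArg Prod.fst heq
          have : c ≤ s * N := hcS
          have hmn : s * (-N) = -(s * N) := by ring
          omega
      · refine key2 {c : ℤ | c ≤ s * N} (N : ZMod m) a ?_ xv hxv z hz
        intro c hcS heq
        apply hi
        have hsnd : (N : ZMod m) + a.2 = 0 := congrArg Prod.snd heq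
        have : a.2 = -(N : ZMod m) := by linear_combination hsnd - (N : ZMod m)
        rw [this]; push_cast; ring
    · simp
    · intro z w hz hw; simp [map_add, hz, hw]
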